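/- For every i ∈ ℕ and all integers j, k, l, m ≥ 1, every entry of the matrix C1 · C2^{2i+1} · C1^j · C2^k · C1^l · C2^m is positive, and every entry of the matrix C2 · C1^{2i+1} · C2^j · C1^k · C2^l · C1^m is positive. -/

import Mathlib

/-- The matrix `C₁`. -/
def C1 : Matrix (Fin 3) (Fin 3) ℤ := !![1, 1, 0; 0, 0, 1; 0, 1, 0]

/-- The matrix `C₂`. -/
def C2 : Matrix (Fin 3) (Fin 3) ℤ := !![0, 1, 0; 1, 0, 0; 0, 1, 1]

instance decMatNonneg33 (M : Matrix (Fin 3) (Fin 3) ℤ) : Decidable (∀ p q, 0 ≤ M p q) :=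
  @Nat.decidableForallFin 3 _ fun p => @Nat.decidableForallFin 3 _ fun q => Int.decLe 0 (M p q)

instance decMatLe33 (M N : Matrix (Fin 3) (Fin 3) ℤ) : Decidable (∀ p q, M p q ≤ N p q) :=
  @Nat.decidableForallFin 3 _ fun p => @Nat.decidableForallFin 3 _ fun q => Int.decLe (M p q) (N p q)

instance decMatPos33 (M : Matrix (Fin 3) (Fin 3) ℤ) : Decidable (∀ p q, 0 < M p q) :=
  @Nat.decidableForallFin 3 _ fun p => @Nat.decidableForallFin 3 _ fun q => Int.decLt 0 (M p q)

/-- `B` is a nonnegative entrywise lower bound for `A`. -/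
def Dom (A B : Matrix (Fin 3) (Fin 3) ℤ) : Prop :=
  (∀ p q, 0 ≤ B p q) ∧ (∀ p q, B p q ≤ A p q)

lemma dom_refl {A : Matrix (Fin 3) (Fin 3) ℤ} (h : ∀ p q, 0 ≤ A p q) : Dom A A :=
  ⟨h, fun _ _ => le_rfl⟩

lemma dom_trans {A B C : Matrix (Fin 3) (Fin 3) ℤ} (h1 : Dom A B) (h2 : Dom B C) :
    Dom A C :=
  ⟨h2.1, fun p q => (h2.2 p q).trans (h1.2 p q)⟩

lemma dom_mul {A B C D : Matrix (Fin 3) (Fin 3) ℤ} (h1 : Dom A B) (h2 : Dom C D) :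
    Dom (A * C) (B * D) := by
  constructor
  · intro p q
    rw [Matrix.mul_apply]
    exact Finset.sum_nonneg fun r _ => mul_nonneg (h1.1 p r) (h2.1 r q)
  · intro p q
    rw [Matrix.mul_apply, Matrix.mul_apply]
    refine Finset.sum_le_sum fun r _ => ?_
    exact mul_le_mul (h1.2 p r) (h2.2 r q) (h2.1 r q) ((h1.1 p r).trans (h1.2 p r))

lemma pos_of_dom {A B : Matrix (Fin 3) (Fin 3) ℤ} (h : Dom A B)
    (hpos : ∀ p q, 0 < B p q) : ∀ p q, 0 < A p q :=
  fun p q => (hpos p q).trans_le (h.2 p q)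

lemma C1_pow_cases : ∀ n, 1 ≤ n → Dom (C1 ^ n) C1 ∨ Dom (C1 ^ n) (C1 * C1) := by
  intro n hn
  obtain ⟨n, rfl⟩ := Nat.exists_eq_add_of_le hn
  induction n with
  | zero => left; rw [pow_one]; exact dom_refl (by decide)
  | succ n ih =>
    have hp : C1 ^ (1 + (n + 1)) = C1 ^ (1 + n) * C1 := by rw [← pow_succ]; ring_nf
    rw [hp]
    rcases ih (by omega) with h | h
    · right; exact dom_mul h (dom_refl (by decide))
    · left
      exact dom_trans (dom_mul h (dom_refl (by decide)))
        (⟨by decide, by decide⟩ : Dom (C1 * C1 * C1) C1)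

lemma C2_pow_cases : ∀ n, 1 ≤ n → Dom (C2 ^ n) C2 ∨ Dom (C2 ^ n) (C2 * C2) := by
  intro n hn
  obtain ⟨n, rfl⟩ := Nat.exists_eq_add_of_le hn
  induction n with
  | zero => left; rw [pow_one]; exact dom_refl (by decide)
  | succ n ih =>
    have hp : C2 ^ (1 + (n + 1)) = C2 ^ (1 + n) * C2 := by rw [← pow_succ]; ring_nf
    rw [hp]
    rcases ih (by omega) with h | h
    · right; exact dom_mul h (dom_refl (by decide))
    · left
      exact dom_trans (dom_mul h (dom_refl (by decide)))
        (⟨by decide, by decide⟩ : Dom (C2 * C2 * C2) C2)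

lemma C1_odd (a : ℕ) : Dom (C1 ^ (2 * a + 1)) C1 := by
  induction a with
  | zero => rw [pow_one]; exact dom_refl (by decide)
  | succ n ih =>
    have hp : C1 ^ (2 * (n + 1) + 1) = C1 ^ (2 * n + 1) * (C1 * C1) := by
      rw [← pow_two, ← pow_add]; ring_nf
    rw [hp]
    exact dom_trans (dom_mul ih (dom_refl (by decide)))
      (⟨by decide, by decide⟩ : Dom (C1 * (C1 * C1)) C1)

lemma C2_odd (a : ℕ) : Dom (C2 ^ (2 * a + 1)) C2 := by
  induction a with
  | zero => rw [pow_one]; exact dom_refl (by decide)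
  | succ n ih =>
    have hp : C2 ^ (2 * (n + 1) + 1) = C2 ^ (2 * n + 1) * (C2 * C2) := by
      rw [← pow_two, ← pow_add]; ring_nf
    rw [hp]
    exact dom_trans (dom_mul ih (dom_refl (by decide)))
      (⟨by decide, by decide⟩ : Dom (C2 * (C2 * C2)) C2)

theorem stmt3 (i j k l m : ℕ) (hj : 1 ≤ j) (hk : 1 ≤ k) (hl : 1 ≤ l) (hm : 1 ≤ m) :
    (∀ p q : Fin 3,
      0 < (C1 * C2 ^ (2 * i + 1) * C1 ^ j * C2 ^ k * C1 ^ l * C2 ^ m) p q) ∧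
    (∀ p q : Fin 3,
      0 < (C2 * C1 ^ (2 * i + 1) * C2 ^ j * C1 ^ k * C2 ^ l * C1 ^ m) p q) := by
  constructor
  · rcases C1_pow_cases j hj with hj' | hj' <;>
    rcases C2_pow_cases k hk with hk' | hk' <;>
    rcases C1_pow_cases l hl with hl' | hl' <;>
    rcases C2_pow_cases m hm with hm' | hm' <;>
    exact pos_of_dom
      (dom_mul (dom_mul (dom_mul (dom_mul
        (dom_mul (dom_refl (by decide)) (C2_odd i)) hj') hk') hl') hm')
      (by decide)
  · rcases C2_pow_cases j hj with hj' | hj' <;>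
    rcases C1_pow_cases k hk with hk' | hk' <;>
    rcases C2_pow_cases l hl with hl' | hl' <;>
    rcases C1_pow_cases m hm with hm' | hm' <;>
    exact pos_of_dom
      (dom_mul (dom_mul (dom_mul (dom_mul
        (dom_mul (dom_refl (by decide)) (C1_odd i)) hj') hk') hl') hm')
      (by decide)
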